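/- Let G be a topological gyrogroup, H a closed strongly L-subgyrogroup of G, π : G → G/H the natural quotient mapping, and a ∈ G. Let λ_a : G → G be the left translation λ_a(x) = a⊕x, and let h_a : G/H → G/H be defined by h_a(x⊕H) = a⊕(x⊕H) = (a⊕x)⊕H. Then h_a is a homeomorphism of G/H onto itself, and π ∘ λ_a = h_a ∘ π. -/

import Mathlib

universe u

/-- A gyrogroup: a groupoid with identity, inverses, gyroautomorphisms satisfying the
left gyroassociative law and the left loop property. -/
class Gyrogroup (G : Type u) where
  add : G → G → G
  zero : G
  neg : G → G
  gyr : G → G → G → G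
  zero_add : ∀ x, add zero x = x
  add_zero : ∀ x, add x zero = x
  neg_add : ∀ x, add (neg x) x = zero
  add_neg : ∀ x, add x (neg x) = zero
  gyr_bijective : ∀ a b, Function.Bijective (gyr a b)
  gyr_add : ∀ a b x y, gyr a b (add x y) = add (gyr a b x) (gyr a b y)
  gyrassoc : ∀ a b z, add a (add b z) = add (add a b) (gyr a b z)
  loop : ∀ a b, gyr (add a b) b = gyr a b

/-- A topological gyrogroup: the operation is jointly continuous and inversion is continuous. -/
class TopologicalGyrogroup (G : Type u) [TopologicalSpace G] [Gyrogroup G] : Prop where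
  continuous_add : Continuous fun p : G × G => Gyrogroup.add p.1 p.2
  continuous_neg : Continuous (Gyrogroup.neg : G → G)

/-- `H` is a subgyrogroup of `G` (by the subgyrogroup criterion: nonempty and closed
under the operation and inversion; this is equivalent to `(H, ⊕|H)` being itself a
gyrogroup whose gyroautomorphisms are the restrictions of those of `G`). -/
structure IsSubgyrogroup {G : Type u} [Gyrogroup G] (H : Set G) : Prop where
  nonempty : H.Nonempty
  add_mem : ∀ ⦃a⦄, a ∈ H → ∀ ⦃b⦄, b ∈ H → Gyrogroup.add a b ∈ H
  neg_mem : ∀ ⦃a⦄, a ∈ H → Gyrogroup.neg a ∈ H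

/-- An `L`-subgyrogroup: a subgyrogroup with `gyr[a,h](H) = H` for all `a ∈ G`, `h ∈ H`. -/
structure IsLSubgyrogroup {G : Type u} [Gyrogroup G] (H : Set G)
    extends IsSubgyrogroup H : Prop where
  gyr_image : ∀ (a : G), ∀ ⦃h⦄, h ∈ H → Gyrogroup.gyr a h '' H = H

/-- A strongly `L`-subgyrogroup: a subgyrogroup with `gyr[a,b](H) ⊆ H` for all `a, b ∈ G`. -/
structure IsStronglyLSubgyrogroup {G : Type u} [Gyrogroup G] (H : Set G)
    extends IsSubgyrogroup H : Prop where
  gyr_image_subset : ∀ a b : G, Gyrogroup.gyr a b '' H ⊆ H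

/-- The pointwise sum `A ⊕ B = {a ⊕ b : a ∈ A, b ∈ B}` of two subsets. -/
def setAdd {G : Type u} [Gyrogroup G] (A B : Set G) : Set G :=
  Set.image2 Gyrogroup.add A B

/-- The left coset `a ⊕ H = {a ⊕ h : h ∈ H}`. -/
def lCoset {G : Type u} [Gyrogroup G] (H : Set G) (a : G) : Set G :=
  (fun h => Gyrogroup.add a h) '' H

/-- The setoid on `G` identifying points with the same left coset modulo `H`. -/
def cosetSetoid {G : Type u} [Gyrogroup G] (H : Set G) : Setoid G :=
  ⟨fun x y => lCoset H x = lCoset H y,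
   ⟨fun _ => rfl, fun h => h.symm, fun h₁ h₂ => h₁.trans h₂⟩⟩

/-- The coset space `G/H`, carrying the quotient topology: a set `O ⊆ G/H` is open
iff `π⁻¹(O)` is open in `G`. -/
abbrev GyroQuot {G : Type u} [Gyrogroup G] (H : Set G) : Type u :=
  Quotient (cosetSetoid H)

/-- The natural quotient map `π : G → G/H`, `a ↦ a ⊕ H`. -/
def qmap {G : Type u} [Gyrogroup G] (H : Set G) (a : G) : GyroQuot H :=
  Quotient.mk (cosetSetoid H) a


section Aux

open Gyrogroup

variable {G : Type u} [Gyrogroup G]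

lemma gyro_add_left_injective (b : G) : Function.Injective (fun z : G => Gyrogroup.add b z) := by
  intro u v h
  dsimp only at h
  have h2 : add (neg b) (add b u) = add (neg b) (add b v) := by rw [h]
  rw [gyrassoc, gyrassoc, Gyrogroup.neg_add, Gyrogroup.zero_add, Gyrogroup.zero_add] at h2
  exact (gyr_bijective (neg b) b).1 h2

lemma gyro_gyr_zero_left (b z : G) : gyr zero b z = z := by
  have h := gyrassoc zero b z
  rw [Gyrogroup.zero_add, Gyrogroup.zero_add] at h
  exact (gyro_add_left_injective b h.symm)

lemma gyro_gyr_neg_self (b z : G) : gyr (neg b) b z = z := by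
  have h := loop (neg b) b
  rw [Gyrogroup.neg_add] at h
  rw [← h, gyro_gyr_zero_left]

lemma gyro_gyr_self_neg (b z : G) : gyr b (neg b) z = z := by
  have h := loop b (neg b)
  rw [Gyrogroup.add_neg] at h
  rw [← h, gyro_gyr_zero_left]

lemma gyro_neg_add_cancel (a z : G) : add (neg a) (add a z) = z := by
  rw [gyrassoc, Gyrogroup.neg_add, Gyrogroup.zero_add, gyro_gyr_neg_self]

lemma gyro_add_neg_cancel (a z : G) : add a (add (neg a) z) = z := by
  rw [gyrassoc, Gyrogroup.add_neg, Gyrogroup.zero_add, gyro_gyr_self_neg]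

/-- `gyr[⊖a, a⊕b]` is a right inverse of `gyr[a,b]`. -/
lemma gyro_gyr_gyr_cancel (a b z : G) :
    gyr a b (gyr (neg a) (add a b) z) = z := by
  apply gyro_add_left_injective (add a b)
  dsimp only
  rw [← gyrassoc]
  have h1 : add b (gyr (neg a) (add a b) z) = add (neg a) (add (add a b) z) := by
    rw [gyrassoc (neg a) (add a b) z, gyro_neg_add_cancel]
  rw [h1, gyro_add_neg_cancel]

end Aux

section Key

open Gyrogroup

variable {G : Type u} [Gyrogroup G]

lemma gyr_image_eq {H : Set G} (hH : IsStronglyLSubgyrogroup H) (a b : G) :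
    gyr a b '' H = H := by
  apply Set.Subset.antisymm (hH.gyr_image_subset a b)
  intro h hh
  exact ⟨gyr (neg a) (add a b) h, hH.gyr_image_subset _ _ ⟨h, hh, rfl⟩,
    gyro_gyr_gyr_cancel a b h⟩

lemma lCoset_add {H : Set G} (hH : IsStronglyLSubgyrogroup H) (c x : G) :
    lCoset H (add c x) = (fun t => add c t) '' lCoset H x := by
  calc lCoset H (add c x)
      = (fun t => add (add c x) t) '' (gyr c x '' H) := by
        rw [gyr_image_eq hH]; rfl
    _ = (fun h => add (add c x) (gyr c x h)) '' H := Set.image_image _ _ _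
    _ = (fun h => add c (add x h)) '' H := by
        apply Set.image_congr
        intro h _
        exact (gyrassoc c x h).symm
    _ = (fun t => add c t) '' ((fun h => add x h) '' H) := (Set.image_image _ _ _).symm
    _ = (fun t => add c t) '' lCoset H x := rfl

lemma coset_rel {H : Set G} (hH : IsStronglyLSubgyrogroup H) (c : G) :
    Relator.LiftFun (cosetSetoid H).r (cosetSetoid H).r (fun x => add c x) (fun x => add c x) := by
  intro x y hxy
  show lCoset H (add c x) = lCoset H (add c y)
  rw [lCoset_add hH, lCoset_add hH]
  exact congrArg _ hxy

/-- Translation on the quotient. -/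
def qtrans {H : Set G} (hH : IsStronglyLSubgyrogroup H) (c : G) :
    GyroQuot H → GyroQuot H :=
  Quotient.map' (fun x => add c x) (coset_rel hH c)

lemma qtrans_mk {H : Set G} (hH : IsStronglyLSubgyrogroup H) (c x : G) :
    qtrans hH c (qmap H x) = qmap H (add c x) := rfl

end Key

/-- For a closed strongly L-subgyrogroup `H` and `a ∈ G`, the left
translation `h_a : G/H → G/H`, `x ⊕ H ↦ (a ⊕ x) ⊕ H`, is a homeomorphism of `G/H`
satisfying `π ∘ λ_a = h_a ∘ π`. -/
theorem stmt_11 {G : Type u} [Gyrogroup G] [TopologicalSpace G] [TopologicalGyrogroup G]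
    (H : Set G) (hH : IsStronglyLSubgyrogroup H) (hcl : IsClosed H) (a : G) :
    ∃ e : GyroQuot H ≃ₜ GyroQuot H, ∀ x : G, e (qmap H x) = qmap H (Gyrogroup.add a x) := by
  classical
  refine ⟨⟨⟨qtrans hH a, qtrans hH (Gyrogroup.neg a), ?_, ?_⟩, ?_, ?_⟩, fun x => rfl⟩
  · intro q
    induction q using Quotient.ind with
    | _ x =>
      show qtrans hH _ (qtrans hH _ (qmap H x)) = qmap H x
      rw [qtrans_mk, qtrans_mk, gyro_neg_add_cancel]
  · intro q
    induction q using Quotient.ind with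
    | _ x =>
      show qtrans hH _ (qtrans hH _ (qmap H x)) = qmap H x
      rw [qtrans_mk, qtrans_mk, gyro_add_neg_cancel]
  · have hc : Continuous (fun x : G => Gyrogroup.add a x) :=
      TopologicalGyrogroup.continuous_add.comp (continuous_const.prodMk continuous_id)
    exact hc.quotient_map' (coset_rel hH a)
  · have hc : Continuous (fun x : G => Gyrogroup.add (Gyrogroup.neg a) x) :=
      TopologicalGyrogroup.continuous_add.comp (continuous_const.prodMk continuous_id)
    exact hc.quotient_map' (coset_rel hH (Gyrogroup.neg a))
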